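/- Let m be an invariant density for a transition kernel p(t,x,y) satisfying the two-sided Aronson bounds with constant C = C_T ≥ 1 on (0,T], i.e. m(y) = ∫ m(x) p(t,x,y) dx for all t > 0, with ∫ m = 1 and m continuous. If p(t,x,y) → m(y) pointwise as t → ∞ (for each fixed x,y), then for all y ∈ ℝ^d: C T^{-d/2} ≥ m(y) ≥ 2^{-d} C^{-2(d+2)} exp(-2C|y|^2/T) · m(0). -/

import Mathlib

open Real MeasureTheory Filter

lemma const_ineq (D C : ℝ) (hD : 0 ≤ D) (hC : 1 ≤ C) :
    2 ^ (-D) * C ^ (-2 * (D + 2)) * C * (C * (2 * C ^ 2) ^ (D / 2)) ≤ 1 := by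
  have hC0 : (0:ℝ) < C := lt_of_lt_of_le one_pos hC
  have h2 : (2 * C ^ 2 : ℝ) ^ (D / 2) = 2 ^ (D / 2) * C ^ D := by
    rw [Real.mul_rpow (by norm_num) (by positivity)]
    congr 1
    rw [← Real.rpow_natCast C 2, ← Real.rpow_mul hC0.le]
    congr 1
    push_cast; ring
  have e2 : (2:ℝ) ^ (-D) * 2 ^ (D/2) = 2 ^ (-(D/2)) := by
    rw [← Real.rpow_add (by norm_num : (0:ℝ) < 2)]
    ring_nf
  have hCe : C * C = C ^ (2:ℝ) := by
    rw [show (2:ℝ) = ((2:ℕ):ℝ) by norm_num, Real.rpow_natCast]; ring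
  have eC : C ^ (-2 * (D + 2)) * C ^ D * C ^ (2:ℝ) = C ^ (-(D + 2)) := by
    rw [← Real.rpow_add hC0, ← Real.rpow_add hC0]
    congr 1; ring
  calc 2 ^ (-D) * C ^ (-2 * (D + 2)) * C * (C * (2 * C ^ 2) ^ (D / 2))
      = (2 ^ (-D) * 2 ^ (D/2)) * (C ^ (-2 * (D + 2)) * C ^ D * (C * C)) := by
        rw [h2]; ring
    _ = 2 ^ (-(D/2)) * C ^ (-(D + 2)) := by rw [e2, hCe, eC]
    _ ≤ 1 * 1 := by
        apply mul_le_mul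
        · exact Real.rpow_le_one_of_one_le_of_nonpos (by norm_num) (by linarith [hD])
        · exact Real.rpow_le_one_of_one_le_of_nonpos hC (by linarith)
        · positivity
        · norm_num
    _ = 1 := by norm_num
lemma key_pointwise (D T C : ℝ) (hD : 0 ≤ D) (hT : 0 < T) (hC : 1 ≤ C)
    (a b r : ℝ) (hrab : r ^ 2 ≤ 2 * a ^ 2 + 2 * b ^ 2) :
    2 ^ (-D) * C ^ (-2 * (D + 2)) * Real.exp (-2 * C * b ^ 2 / T) *
      (C / (T / (2 * C ^ 2)) ^ (D / 2) * Real.exp (-a ^ 2 / (C * (T / (2 * C ^ 2)))))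
      ≤ 1 / (C * T ^ (D / 2)) * Real.exp (-C * r ^ 2 / T) := by
  have hC0 : (0:ℝ) < C := lt_of_lt_of_le one_pos hC
  have hu0 : (0:ℝ) < T / (2 * C ^ 2) := by positivity
  have hP : (0:ℝ) < (T / (2 * C ^ 2)) ^ (D / 2) := Real.rpow_pos_of_pos hu0 _
  have hR : (0:ℝ) < (2 * C ^ 2 : ℝ) ^ (D / 2) := Real.rpow_pos_of_pos (by positivity) _
  have hQ : (0:ℝ) < T ^ (D / 2) := Real.rpow_pos_of_pos hT _
  have hPQ : T ^ (D / 2) = (T / (2 * C ^ 2)) ^ (D / 2) * (2 * C ^ 2) ^ (D / 2) := by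
    rw [← Real.mul_rpow hu0.le (by positivity), div_mul_cancel₀]
    positivity
  -- exponent rewrite
  have hexp1 : -a ^ 2 / (C * (T / (2 * C ^ 2))) = -2 * C * a ^ 2 / T := by
    field_simp
  rw [hexp1]
  -- exp comparison
  have hexp2 : Real.exp (-2 * C * b ^ 2 / T) * Real.exp (-2 * C * a ^ 2 / T)
      ≤ Real.exp (-C * r ^ 2 / T) := by
    rw [← Real.exp_add]
    apply Real.exp_le_exp.2
    rw [← add_div, div_le_div_iff₀ hT hT]
    nlinarith [mul_le_mul_of_nonneg_left hrab hC0.le]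
  -- constant comparison
  have hconst : 2 ^ (-D) * C ^ (-2 * (D + 2)) * (C / (T / (2 * C ^ 2)) ^ (D / 2))
      ≤ 1 / (C * T ^ (D / 2)) := by
    rw [← mul_div_assoc, div_le_div_iff₀ hP (by positivity)]
    calc 2 ^ (-D) * C ^ (-2 * (D + 2)) * C * (C * T ^ (D / 2))
        = (2 ^ (-D) * C ^ (-2 * (D + 2)) * C * (C * (2 * C ^ 2) ^ (D / 2)))
            * (T / (2 * C ^ 2)) ^ (D / 2) := by rw [hPQ]; ring
      _ ≤ 1 * (T / (2 * C ^ 2)) ^ (D / 2) :=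
          mul_le_mul_of_nonneg_right (const_ineq D C hD hC) hP.le
  calc 2 ^ (-D) * C ^ (-2 * (D + 2)) * Real.exp (-2 * C * b ^ 2 / T) *
        (C / (T / (2 * C ^ 2)) ^ (D / 2) * Real.exp (-2 * C * a ^ 2 / T))
      = (2 ^ (-D) * C ^ (-2 * (D + 2)) * (C / (T / (2 * C ^ 2)) ^ (D / 2))) *
        (Real.exp (-2 * C * b ^ 2 / T) * Real.exp (-2 * C * a ^ 2 / T)) := by ring
    _ ≤ (1 / (C * T ^ (D / 2))) * Real.exp (-C * r ^ 2 / T) := by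
        apply mul_le_mul hconst hexp2 (by positivity) (by positivity)

theorem invariant_density_bounds (d : ℕ) (T C : ℝ) (hT : 0 < T) (hC : 1 ≤ C)
    (p : ℝ → EuclideanSpace ℝ (Fin d) → EuclideanSpace ℝ (Fin d) → ℝ)
    (m : EuclideanSpace ℝ (Fin d) → ℝ)
    (hpos : ∀ t : ℝ, 0 < t → ∀ x y, 0 < p t x y)
    (hCK : ∀ s u : ℝ, 0 < s → 0 < u → ∀ x y : EuclideanSpace ℝ (Fin d),
      p (s + u) x y = ∫ z, p s x z * p u z y)
    (haronson : ∀ t : ℝ, 0 < t → t ≤ T → ∀ x y : EuclideanSpace ℝ (Fin d),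
      (1 / (C * t ^ ((d : ℝ) / 2))) * Real.exp (-C * ‖x - y‖ ^ 2 / t) ≤ p t x y ∧
        p t x y ≤ (C / t ^ ((d : ℝ) / 2)) * Real.exp (-‖x - y‖ ^ 2 / (C * t)))
    (hinv : ∀ t : ℝ, 0 < t → ∀ y, m y = ∫ x, m x * p t x y)
    (hm1 : ∫ x, m x = 1)
    (hmc : Continuous m)
    (hconv : ∀ x y, Tendsto (fun t => p t x y) atTop (nhds (m y))) :
    ∀ y : EuclideanSpace ℝ (Fin d),
      m y ≤ C * T ^ (-(d : ℝ) / 2) ∧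
      2 ^ (-(d : ℝ)) * C ^ (-2 * ((d : ℝ) + 2)) * Real.exp (-2 * C * ‖y‖ ^ 2 / T) * m 0
        ≤ m y := by
  have hC0 : (0:ℝ) < C := lt_of_lt_of_le one_pos hC
  have hu0 : (0:ℝ) < T / (2 * C ^ 2) := by positivity
  have huT : T / (2 * C ^ 2) ≤ T := by
    rw [div_le_iff₀ (by positivity)]
    have h1 : 1 ≤ C ^ 2 := by nlinarith
    nlinarith [mul_le_mul_of_nonneg_left h1 hT.le]
  -- nonnegativity of m
  have hm_nonneg : ∀ x, 0 ≤ m x := by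
    intro x
    exact ge_of_tendsto (hconv x x)
      ((eventually_gt_atTop 0).mono fun t ht => (hpos t ht x x).le)
  -- integrability of m
  have hm_int : Integrable m := by
    by_contra h
    rw [integral_undef h] at hm1
    norm_num at hm1
  -- integrability of CK integrands
  have hint : ∀ s u : ℝ, 0 < s → 0 < u → ∀ x y : EuclideanSpace ℝ (Fin d),
      Integrable (fun z => p s x z * p u z y) := by
    intro s u hs hu x y
    by_contra h
    have h0 := integral_undef h
    rw [← hCK s u hs hu x y] at h0
    exact absurd h0 (hpos (s + u) (by linarith) x y).ne'
  intro y
  constructor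
  · -- upper bound
    have hub : ∀ z, p T z y ≤ C * T ^ (-(d : ℝ) / 2) := by
      intro z
      have h := (haronson T hT le_rfl z y).2
      have he : Real.exp (-‖z - y‖ ^ 2 / (C * T)) ≤ 1 := by
        rw [show (1:ℝ) = Real.exp 0 by simp]
        apply Real.exp_le_exp.2
        apply div_nonpos_of_nonpos_of_nonneg
        · simp [sq_nonneg]
        · positivity
      calc p T z y ≤ C / T ^ ((d : ℝ) / 2) * Real.exp (-‖z - y‖ ^ 2 / (C * T)) := h
        _ ≤ C / T ^ ((d : ℝ) / 2) * 1 :=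
            mul_le_mul_of_nonneg_left he (by positivity)
        _ = C * T ^ (-(d : ℝ) / 2) := by
            rw [mul_one, neg_div, Real.rpow_neg hT.le, div_eq_mul_inv]
    calc m y = ∫ x, m x * p T x y := hinv T hT y
      _ ≤ ∫ x, m x * (C * T ^ (-(d : ℝ) / 2)) := by
          apply integral_mono_of_nonneg
          · exact ae_of_all _ fun x => mul_nonneg (hm_nonneg x) (hpos T hT x y).le
          · exact hm_int.mul_const _
          · exact ae_of_all _ fun x =>
              mul_le_mul_of_nonneg_left (hub x) (hm_nonneg x)
      _ = C * T ^ (-(d : ℝ) / 2) := by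
          rw [integral_mul_const, hm1, one_mul]
  · -- lower bound
    set K : ℝ := 2 ^ (-(d : ℝ)) * C ^ (-2 * ((d : ℝ) + 2)) *
      Real.exp (-2 * C * ‖y‖ ^ 2 / T) with hKdef
    have hK0 : 0 ≤ K := by positivity
    -- pointwise comparison
    have hpoint : ∀ z : EuclideanSpace ℝ (Fin d),
        K * p (T / (2 * C ^ 2)) z 0 ≤ p T z y := by
      intro z
      have up := (haronson (T / (2 * C ^ 2)) hu0 huT z 0).2
      rw [sub_zero] at up
      have lo := (haronson T hT le_rfl z y).1
      have hkey := key_pointwise (d : ℝ) T C (by positivity) hT hC ‖z‖ ‖y‖ ‖z - y‖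
        (by nlinarith [norm_sub_le z y, norm_nonneg z, norm_nonneg y,
          norm_nonneg (z - y), sq_nonneg (‖z‖ - ‖y‖),
          mul_self_le_mul_self (norm_nonneg (z - y)) (norm_sub_le z y)])
      calc K * p (T / (2 * C ^ 2)) z 0
          ≤ K * (C / (T / (2 * C ^ 2)) ^ ((d : ℝ) / 2) *
              Real.exp (-‖z‖ ^ 2 / (C * (T / (2 * C ^ 2))))) :=
            mul_le_mul_of_nonneg_left up hK0
        _ ≤ 1 / (C * T ^ ((d : ℝ) / 2)) * Real.exp (-C * ‖z - y‖ ^ 2 / T) := hkey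
        _ ≤ p T z y := lo
    -- CK comparison for all t > 0
    have hcomp : ∀ t : ℝ, 0 < t →
        K * p (t + T / (2 * C ^ 2)) 0 0 ≤ p (t + T) 0 y := by
      intro t ht
      rw [hCK t (T / (2 * C ^ 2)) ht hu0 0 0, hCK t T ht hT 0 y,
        ← integral_const_mul]
      apply integral_mono ((hint t (T / (2 * C ^ 2)) ht hu0 0 0).const_mul K)
        (hint t T ht hT 0 y)
      intro z
      calc K * (p t 0 z * p (T / (2 * C ^ 2)) z 0)
          = p t 0 z * (K * p (T / (2 * C ^ 2)) z 0) := by ring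
        _ ≤ p t 0 z * p T z y :=
            mul_le_mul_of_nonneg_left (hpoint z) (hpos t ht 0 z).le
    -- pass to the limit
    have l1 : Tendsto (fun t => p (t + T) 0 y) atTop (nhds (m y)) :=
      (hconv 0 y).comp (tendsto_atTop_add_const_right atTop T tendsto_id)
    have l2 : Tendsto (fun t => K * p (t + T / (2 * C ^ 2)) 0 0) atTop
        (nhds (K * m 0)) :=
      ((hconv 0 0).comp
        (tendsto_atTop_add_const_right atTop (T / (2 * C ^ 2)) tendsto_id)).const_mul K
    have := le_of_tendsto_of_tendsto l2 l1 ((eventually_gt_atTop 0).mono hcomp)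
    calc 2 ^ (-(d : ℝ)) * C ^ (-2 * ((d : ℝ) + 2)) *
          Real.exp (-2 * C * ‖y‖ ^ 2 / T) * m 0 = K * m 0 := by rw [hKdef]
      _ ≤ m y := this
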